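/- arXiv:1812.05037 — 4 statements merged into one kernel-verified Lean document; each statement's English description precedes it below -/
import Mathlib

section
/- Let φ be a flow on a metric space, K an attractor, and x a point whose omega-limit set satisfies ∅ ≠ ω(x) ⊆ K and whose negative omega-limit set satisfies ∅ ≠ ω*(x) ⊆ K. Then the set K ∪ {φ(x,t) : t ∈ ℝ} is a compact invariant set. -/
open Set Topology
open Set Topology

/-- The omega-limit set of a point under a flow. -/
def omegaLim {M : Type*} [MetricSpace M] (φ : M → ℝ → M) (x : M) : Set M :=
  ⋂ t ∈ Set.Ioi (0 : ℝ), closure {y | ∃ s ≥ t, φ x s = y}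

/-- A set is invariant under the flow. -/
def IsInvariantSet {M : Type*} [MetricSpace M] (φ : M → ℝ → M) (S : Set M) : Prop :=
  ∀ t : ℝ, (fun y => φ y t) '' S = S

/-- `K` is an attractor: a compact invariant set that is stable and attracting. -/
def IsAttractor {M : Type*} [MetricSpace M] (φ : M → ℝ → M) (K : Set M) : Prop :=
  IsCompact K ∧ IsInvariantSet φ K ∧
  -- stability
  (∀ U : Set M, IsOpen U → K ⊆ U →
    ∃ V : Set M, IsOpen V ∧ K ⊆ V ∧ ∀ x ∈ V, ∀ t ≥ (0 : ℝ), φ x t ∈ U) ∧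
  -- attracting
  (∃ U : Set M, IsOpen U ∧ K ⊆ U ∧
    ∀ x ∈ U, (omegaLim φ x).Nonempty ∧ omegaLim φ x ⊆ K)

/-- The basin of attraction of `K`. -/
def basin {M : Type*} [MetricSpace M] (φ : M → ℝ → M) (K : Set M) : Set M :=
  {x | (omegaLim φ x).Nonempty ∧ omegaLim φ x ⊆ K}

/-- The negative omega-limit set of a point under a flow. -/
def omegaLimNeg {M : Type*} [MetricSpace M] (φ : M → ℝ → M) (x : M) : Set M :=
  ⋂ t ∈ Set.Iio (0 : ℝ), closure {y | ∃ s ≤ t, φ x s = y}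

/-- If both limit sets of a point are nonempty and contained in an attractor K,
then K together with the full trajectory of the point is a compact invariant set. -/
theorem attractor_union_orbit_compact_invariant
    {M : Type*} [MetricSpace M] (φ : M → ℝ → M)
    (hcont : Continuous fun p : M × ℝ => φ p.1 p.2)
    (h0 : ∀ x, φ x 0 = x)
    (hadd : ∀ x s t, φ (φ x s) t = φ x (s + t))
    (K : Set M) (hK : IsAttractor φ K)
    (x : M)
    (hω : (omegaLim φ x).Nonempty ∧ omegaLim φ x ⊆ K)
    (hω' : (omegaLimNeg φ x).Nonempty ∧ omegaLimNeg φ x ⊆ K) :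
    IsCompact (K ∪ {y | ∃ t : ℝ, φ x t = y}) ∧
      IsInvariantSet φ (K ∪ {y | ∃ t : ℝ, φ x t = y}) := by
  obtain ⟨hKc, hKinv, hstab, -⟩ := hK
  obtain ⟨q, hq⟩ := hω'.1
  have hqK : q ∈ K := hω'.2 hq
  constructor
  · apply isCompact_of_finite_subcover
    intro ι U hUopen hcover
    obtain ⟨t, ht⟩ := hKc.elim_finite_subcover U hUopen
      (fun y hy => hcover (Or.inl hy))
    obtain ⟨V, hVopen, hKV, hV⟩ := hstab (⋃ i ∈ t, U i)
      (isOpen_biUnion fun i _ => hUopen i) ht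
    refine ⟨t, fun y hy => ?_⟩
    rcases hy with hy | ⟨r, rfl⟩
    · exact ht hy
    · have hmin : min r (-1) ∈ Set.Iio (0 : ℝ) := by
        simp only [Set.mem_Iio]
        exact lt_of_le_of_lt (min_le_right r (-1)) (by norm_num)
      have hqcl : q ∈ closure {y | ∃ s ≤ min r (-1), φ x s = y} := by
        have := hq
        simp only [omegaLimNeg, Set.mem_iInter] at this
        exact this _ hmin
      obtain ⟨z, hzV, s, hs, rfl⟩ :=
        mem_closure_iff.mp hqcl V hVopen (hKV hqK)
      have hsr : s ≤ r := le_trans hs (min_le_left _ _)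
      have : φ (φ x s) (r - s) ∈ ⋃ i ∈ t, U i :=
        hV _ hzV _ (by linarith)
      rwa [hadd, add_sub_cancel] at this
  · intro r
    rw [Set.image_union, hKinv r]
    congr 1
    ext z
    constructor
    · rintro ⟨y, ⟨s, rfl⟩, rfl⟩
      exact ⟨s + r, (hadd x s r).symm⟩
    · rintro ⟨s, rfl⟩
      exact ⟨φ x (s - r), ⟨s - r, rfl⟩, by show φ (φ x (s - r)) r = φ x s; rw [hadd, sub_add_cancel]⟩
end

section
/- Let φ be a flow on a metric space, let H be a compact set, and let x_n be a sequence of points with times t_n → -∞ such that φ(x_n, [t_n, 0]) ⊆ H for all n, x_n → x, and φ(x_n, t_n) → y. Then φ(y, t) ∈ H for every t ≥ 0. -/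
open Set Topology Filter

/-- If `t n → -∞`, `φ(x n, [t n, 0]) ⊆ H` with `H` compact, `x n → x` and
`φ(x n, t n) → y`, then the forward trajectory of `y` stays in `H`. -/
theorem forward_orbit_in_compact
    {M : Type*} [MetricSpace M] (φ : M → ℝ → M)
    (hcont : Continuous fun p : M × ℝ => φ p.1 p.2)
    (h0 : ∀ x, φ x 0 = x)
    (hadd : ∀ x s t, φ (φ x s) t = φ x (s + t))
    (H : Set M) (hH : IsCompact H)
    (x y : M) (xs : ℕ → M) (ts : ℕ → ℝ)
    (hts : Tendsto ts atTop atBot)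
    (hin : ∀ n, ∀ s ∈ Set.Icc (ts n) (0 : ℝ), φ (xs n) s ∈ H)
    (hx : Tendsto xs atTop (nhds x))
    (hy : Tendsto (fun n => φ (xs n) (ts n)) atTop (nhds y)) :
    ∀ t ≥ (0 : ℝ), φ y t ∈ H := by
  intro t ht
  have key : Tendsto (fun n => φ (xs n) (ts n + t)) atTop (nhds (φ y t)) := by
    have h1 : Tendsto (fun n => (φ (xs n) (ts n), t)) atTop (nhds (y, t)) :=
      hy.prodMk_nhds tendsto_const_nhds
    have := (hcont.tendsto (y, t)).comp h1
    exact this.congr fun n => by simp [Function.comp, hadd]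
  have hev : ∀ᶠ n in atTop, φ (xs n) (ts n + t) ∈ H := by
    filter_upwards [hts.eventually_le_atBot (-t)] with n hn
    exact hin n (ts n + t) ⟨by linarith, by linarith⟩
  exact hH.isClosed.mem_of_tendsto key hev
end

section
/- Let K be a compact invariant set of a flow, (A, R) an attractor-repeller decomposition of K, and (A', R') an attractor-repeller decomposition of R (for the flow restricted to R). Then {A, A', R'} (in this order) is a Morse decomposition of K. -/
set_option linter.unusedSectionVars false


open Set Topology
open Set Topology

/-- `Ms : Fin n → Set M` is a Morse decomposition of the compact invariant set `K`. -/
def IsMorseDecomposition {M : Type*} [MetricSpace M] (φ : M → ℝ → M)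
    (K : Set M) {n : ℕ} (Ms : Fin n → Set M) : Prop :=
  (∀ i j, i ≠ j → Disjoint (Ms i) (Ms j)) ∧
  (∀ i, Ms i ⊆ K ∧ IsCompact (Ms i) ∧ IsInvariantSet φ (Ms i)) ∧
  (∀ x ∈ K \ ⋃ i, Ms i, ∃ j k : Fin n, j < k ∧
    omegaLim φ x ⊆ Ms j ∧ omegaLimNeg φ x ⊆ Ms k)

/-- `A` is an attractor for the flow restricted to the compact invariant set `K`. -/
def IsAttractorIn {M : Type*} [MetricSpace M] (φ : M → ℝ → M) (K A : Set M) : Prop :=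
  A ⊆ K ∧ IsCompact A ∧ IsInvariantSet φ A ∧
  -- attracting in K
  (∃ U : Set M, IsOpen U ∧ A ⊆ U ∧
    ∀ x ∈ K ∩ U, (omegaLim φ x).Nonempty ∧ omegaLim φ x ⊆ A) ∧
  -- stable in K
  (∀ U : Set M, IsOpen U → A ⊆ U →
    ∃ V : Set M, IsOpen V ∧ A ⊆ V ∧ ∀ x ∈ K ∩ V, ∀ t ≥ (0 : ℝ), φ x t ∈ U)

/-- `(A, R)` is an attractor-repeller decomposition of `K`: `A` is an attractor
of the restricted flow and `R` is its dual repeller. -/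
def IsARDecomposition {M : Type*} [MetricSpace M] (φ : M → ℝ → M)
    (K A R : Set M) : Prop :=
  IsAttractorIn φ K A ∧ R = {x ∈ K | omegaLim φ x ∩ A = ∅}

namespace MorseAux

open Filter Metric

variable {M : Type*} [MetricSpace M]

/-- forward tail of an orbit -/
def tl (φ : M → ℝ → M) (x : M) (t : ℝ) : Set M := {y | ∃ s ≥ t, φ x s = y}

/-- backward tail of an orbit -/
def ntl (φ : M → ℝ → M) (x : M) (t : ℝ) : Set M := {y | ∃ s ≤ t, φ x s = y}

variable {φ : M → ℝ → M}

lemma cont1 (hcont : Continuous fun p : M × ℝ => φ p.1 p.2) (t : ℝ) :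
    Continuous fun y => φ y t := hcont.comp (continuous_id.prodMk continuous_const)

lemma cont2 (hcont : Continuous fun p : M × ℝ => φ p.1 p.2) (x : M) :
    Continuous fun s : ℝ => φ x s := hcont.comp (continuous_const.prodMk continuous_id)

lemma tl_mono {x : M} {t t' : ℝ} (h : t ≤ t') : tl φ x t' ⊆ tl φ x t := by
  rintro y ⟨s, hs, he⟩; exact ⟨s, le_trans h hs, he⟩

lemma ntl_mono {x : M} {t t' : ℝ} (h : t ≤ t') : ntl φ x t ⊆ ntl φ x t' := by
  rintro y ⟨s, hs, he⟩; exact ⟨s, le_trans hs h, he⟩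

lemma mem_omegaLim {x y : M} : y ∈ omegaLim φ x ↔ ∀ t : ℝ, y ∈ closure (tl φ x t) := by
  constructor
  · intro h t
    have h1 : y ∈ closure (tl φ x (max t 1)) := by
      exact Set.mem_iInter₂.1 h (max t 1) (Set.mem_Ioi.2 (lt_of_lt_of_le one_pos (le_max_right t 1)))
    exact closure_mono (tl_mono (le_max_left t 1)) h1
  · intro h
    exact Set.mem_iInter₂.2 fun t _ => h t

lemma mem_omegaLimNeg {x y : M} : y ∈ omegaLimNeg φ x ↔ ∀ t : ℝ, y ∈ closure (ntl φ x t) := by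
  constructor
  · intro h t
    have h1 : y ∈ closure (ntl φ x (min t (-1))) := by
      exact Set.mem_iInter₂.1 h (min t (-1)) (Set.mem_Iio.2 (lt_of_le_of_lt (min_le_right t (-1)) (by norm_num)))
    exact closure_mono (ntl_mono (min_le_left t (-1))) h1
  · intro h
    exact Set.mem_iInter₂.2 fun t _ => h t

lemma omegaLim_closed (x : M) : IsClosed (omegaLim φ x) :=
  isClosed_biInter fun _ _ => isClosed_closure

lemma omegaLimNeg_closed (x : M) : IsClosed (omegaLimNeg φ x) :=
  isClosed_biInter fun _ _ => isClosed_closure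

section shift
variable (hadd : ∀ x s t, φ (φ x s) t = φ x (s + t))
include hadd

lemma tl_shift (x : M) (u t : ℝ) : tl φ (φ x u) t = tl φ x (u + t) := by
  ext y
  constructor
  · rintro ⟨s, hs, rfl⟩
    exact ⟨u + s, by linarith, (hadd x u s).symm⟩
  · rintro ⟨s, hs, rfl⟩
    refine ⟨s - u, by linarith, ?_⟩
    rw [hadd]; ring_nf

lemma omegaLim_shift (x : M) (u : ℝ) : omegaLim φ (φ x u) = omegaLim φ x := by
  ext y
  rw [mem_omegaLim, mem_omegaLim]
  constructor
  · intro h t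
    have := h (t - u)
    rwa [tl_shift hadd, show u + (t - u) = t by ring] at this
  · intro h t
    rw [tl_shift hadd]
    exact h (u + t)

end shift

lemma inv_mem {S : Set M} (hS : IsInvariantSet φ S) {x : M} (hx : x ∈ S) (t : ℝ) :
    φ x t ∈ S := by
  have := hS t
  rw [← this]
  exact ⟨x, hx, rfl⟩

lemma mk_invariant (h0 : ∀ x, φ x 0 = x) (hadd : ∀ x s t, φ (φ x s) t = φ x (s + t))
    {S : Set M} (h : ∀ x ∈ S, ∀ t : ℝ, φ x t ∈ S) : IsInvariantSet φ S := by
  intro t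
  ext y
  constructor
  · rintro ⟨x, hx, rfl⟩; exact h x hx t
  · intro hy
    refine ⟨φ y (-t), h y hy (-t), ?_⟩
    show φ (φ y (-t)) t = y
    rw [hadd, neg_add_cancel, h0]

lemma omegaLim_nonempty {C : Set M} {x : M} (hC : IsCompact C) (horb : ∀ s : ℝ, φ x s ∈ C) :
    (omegaLim φ x).Nonempty := by
  have he : omegaLim φ x = ⋂ i : Set.Ioi (0 : ℝ), closure (tl φ x i) :=
    Set.biInter_eq_iInter _ _
  rw [he]
  have htlC : ∀ t : ℝ, closure (tl φ x t) ⊆ C := by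
    intro t
    refine closure_minimal ?_ hC.isClosed
    rintro y ⟨s, _, rfl⟩; exact horb s
  apply IsCompact.nonempty_iInter_of_directed_nonempty_isCompact_isClosed
  · rintro ⟨i, hi⟩ ⟨j, hj⟩
    refine ⟨⟨max i j, Set.mem_Ioi.2 (lt_of_lt_of_le (Set.mem_Ioi.1 hi) (le_max_left _ _))⟩, ?_, ?_⟩
    · exact closure_mono (tl_mono (le_max_left _ _))
    · exact closure_mono (tl_mono (le_max_right _ _))
  · rintro ⟨i, _⟩
    exact ⟨φ x i, subset_closure ⟨i, le_refl _, rfl⟩⟩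
  · rintro ⟨i, _⟩
    exact hC.of_isClosed_subset isClosed_closure (htlC i)
  · rintro ⟨i, _⟩
    exact isClosed_closure

lemma omegaLimNeg_nonempty {C : Set M} {x : M} (hC : IsCompact C) (horb : ∀ s : ℝ, φ x s ∈ C) :
    (omegaLimNeg φ x).Nonempty := by
  have he : omegaLimNeg φ x = ⋂ i : Set.Iio (0 : ℝ), closure (ntl φ x i) :=
    Set.biInter_eq_iInter _ _
  rw [he]
  have htlC : ∀ t : ℝ, closure (ntl φ x t) ⊆ C := by
    intro t
    refine closure_minimal ?_ hC.isClosed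
    rintro y ⟨s, _, rfl⟩; exact horb s
  apply IsCompact.nonempty_iInter_of_directed_nonempty_isCompact_isClosed
  · rintro ⟨i, hi⟩ ⟨j, hj⟩
    refine ⟨⟨min i j, Set.mem_Iio.2 (lt_of_le_of_lt (min_le_left _ _) (Set.mem_Iio.1 hi))⟩, ?_, ?_⟩
    · exact closure_mono (ntl_mono (min_le_left _ _))
    · exact closure_mono (ntl_mono (min_le_right _ _))
  · rintro ⟨i, _⟩
    exact ⟨φ x i, subset_closure ⟨i, le_refl _, rfl⟩⟩
  · rintro ⟨i, _⟩
    exact hC.of_isClosed_subset isClosed_closure (htlC i)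
  · rintro ⟨i, _⟩
    exact isClosed_closure

lemma eventually_neg_tail_subset {C : Set M} {x : M} (hC : IsCompact C)
    (horb : ∀ s : ℝ, φ x s ∈ C) {N : Set M} (hNo : IsOpen N) (hN : omegaLimNeg φ x ⊆ N) :
    ∃ T : ℝ, ∀ r ≤ T, φ x r ∈ N := by
  by_contra hcon
  push_neg at hcon
  have hne : ∀ i : Set.Iio (0:ℝ), (closure (ntl φ x i) ∩ Nᶜ).Nonempty := by
    rintro ⟨i, _⟩
    obtain ⟨r, hr, hrN⟩ := hcon i
    exact ⟨φ x r, subset_closure ⟨r, hr, rfl⟩, hrN⟩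
  have : (⋂ i : Set.Iio (0:ℝ), closure (ntl φ x (i:ℝ)) ∩ Nᶜ).Nonempty := by
    refine IsCompact.nonempty_iInter_of_directed_nonempty_isCompact_isClosed
      (fun i : Set.Iio (0:ℝ) => closure (ntl φ x (i:ℝ)) ∩ Nᶜ) ?_ hne ?_ ?_
    · rintro ⟨i, hi⟩ ⟨j, hj⟩
      refine ⟨⟨min i j, Set.mem_Iio.2 (lt_of_le_of_lt (min_le_left _ _) (Set.mem_Iio.1 hi))⟩, ?_, ?_⟩
      · exact Set.inter_subset_inter_left _ (closure_mono (ntl_mono (min_le_left _ _)))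
      · exact Set.inter_subset_inter_left _ (closure_mono (ntl_mono (min_le_right _ _)))
    · rintro ⟨i, _⟩
      refine IsCompact.of_isClosed_subset (hC.of_isClosed_subset isClosed_closure ?_)
        (isClosed_closure.inter hNo.isClosed_compl) Set.inter_subset_left
      refine closure_minimal ?_ hC.isClosed
      rintro y ⟨s, _, rfl⟩; exact horb s
    · rintro ⟨i, _⟩
      exact isClosed_closure.inter hNo.isClosed_compl
  obtain ⟨y, hy⟩ := this
  have hy1 : y ∈ omegaLimNeg φ x := by
    rw [mem_omegaLimNeg]
    intro t
    have := Set.mem_iInter.1 hy ⟨min t (-1), Set.mem_Iio.2 (lt_of_le_of_lt (min_le_right t (-1)) (by norm_num))⟩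
    exact closure_mono (ntl_mono (min_le_left t (-1))) this.1
  have hy2 : y ∈ Nᶜ := (Set.mem_iInter.1 hy ⟨-1, Set.mem_Iio.2 (by norm_num)⟩).2
  exact hy2 (hN hy1)

lemma frequently_neg {x a : M} (ha : a ∈ omegaLimNeg φ x) {V : Set M} (hVo : IsOpen V)
    (haV : a ∈ V) (T : ℝ) : ∃ r ≤ T, φ x r ∈ V := by
  have h1 : a ∈ closure (ntl φ x T) := mem_omegaLimNeg.1 ha T
  obtain ⟨y, hyV, s, hs, rfl⟩ := mem_closure_iff.1 h1 V hVo haV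
  exact ⟨s, hs, hyV⟩

lemma frequently_pos {x a : M} (ha : a ∈ omegaLim φ x) {V : Set M} (hVo : IsOpen V)
    (haV : a ∈ V) (T : ℝ) : ∃ s ≥ T, φ x s ∈ V := by
  have h1 : a ∈ closure (tl φ x T) := mem_omegaLim.1 ha T
  obtain ⟨y, hyV, s, hs, rfl⟩ := mem_closure_iff.1 h1 V hVo haV
  exact ⟨s, hs, hyV⟩

lemma omegaLimNeg_inv (hcont : Continuous fun p : M × ℝ => φ p.1 p.2)
    (hadd : ∀ x s t, φ (φ x s) t = φ x (s + t)) {x y : M}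
    (hy : y ∈ omegaLimNeg φ x) (t : ℝ) : φ y t ∈ omegaLimNeg φ x := by
  rw [mem_omegaLimNeg] at hy ⊢
  intro u
  have h1 : y ∈ closure (ntl φ x (u - t)) := hy (u - t)
  have h2 := image_closure_subset_closure_image (cont1 hcont t) (Set.mem_image_of_mem _ h1)
  refine closure_mono ?_ h2
  rintro z ⟨w, ⟨s, hs, rfl⟩, rfl⟩
  exact ⟨s + t, by linarith, (hadd x s t).symm⟩

lemma omegaLim_subset_of_inv {S : Set M} {z : M} (hS : IsClosed S)
    (hfwd : ∀ w ∈ S, ∀ t : ℝ, 0 ≤ t → φ w t ∈ S) (hz : z ∈ S) : omegaLim φ z ⊆ S := by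
  intro y hy
  have h1 : y ∈ closure (tl φ z 0) := mem_omegaLim.1 hy 0
  refine hS.closure_subset (closure_mono ?_ h1)
  rintro w ⟨s, hs, rfl⟩
  exact hfwd z hz s hs

lemma omegaLimNeg_subset_of_inv {S : Set M} {z : M} (hS : IsClosed S)
    (hbwd : ∀ w ∈ S, ∀ t : ℝ, φ w t ∈ S) (hz : z ∈ S) : omegaLimNeg φ z ⊆ S := by
  intro y hy
  have h1 : y ∈ closure (ntl φ z 0) := mem_omegaLimNeg.1 hy 0
  refine hS.closure_subset (closure_mono ?_ h1)
  rintro w ⟨s, hs, rfl⟩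
  exact hbwd z hz s

lemma sep_of_not_mem {A : Set M} {z : M} (hA : IsCompact A) (hz : z ∉ A) :
    ∃ W, IsOpen W ∧ A ⊆ W ∧ z ∉ closure W := by
  obtain ⟨U, V, hUo, hVo, hzU, hAV, hd⟩ :=
    SeparatedNhds.of_isCompact_isCompact isCompact_singleton hA (by simpa using hz)
  refine ⟨V, hVo, hAV, fun hc => ?_⟩
  obtain ⟨y, hyU, hyV⟩ := mem_closure_iff.1 hc U hUo (hzU rfl)
  exact (Set.disjoint_left.1 hd hyU) hyV

end MorseAux

namespace MorseAux
open Filter Metric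

variable {M : Type*} [MetricSpace M] {φ : M → ℝ → M} {K A : Set M}

section AR
variable (hcont : Continuous fun p : M × ℝ => φ p.1 p.2)
  (h0 : ∀ x, φ x 0 = x) (hadd : ∀ x s t, φ (φ x s) t = φ x (s + t))
include hcont h0 hadd

/-- If the omega limit of a point of `K` meets the attractor, it is contained in it. -/
lemma ar_basin (hKinv : IsInvariantSet φ K) (hA : IsAttractorIn φ K A)
    {x : M} (hx : x ∈ K) (hne : (omegaLim φ x ∩ A).Nonempty) :
    (omegaLim φ x).Nonempty ∧ omegaLim φ x ⊆ A := by
  obtain ⟨hAK, hAc, hAinv, ⟨U, hUo, hAU, hUatt⟩, hstab⟩ := hA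
  obtain ⟨a, haω, haA⟩ := hne
  obtain ⟨s, _, hsV⟩ := frequently_pos haω hUo (hAU haA) 0
  have h1 := hUatt (φ x s) ⟨inv_mem hKinv hx s, hsV⟩
  rwa [omegaLim_shift hadd] at h1

lemma ar_not_in_R (hA : IsAttractorIn φ K A) {x : M} (hx : x ∈ A) :
    ¬(omegaLim φ x ∩ A = ∅) := by
  obtain ⟨hAK, hAc, hAinv, ⟨U, hUo, hAU, hUatt⟩, hstab⟩ := hA
  obtain ⟨hne, hsub⟩ := hUatt x ⟨hAK hx, hAU hx⟩
  obtain ⟨b, hb⟩ := hne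
  exact fun h => Set.eq_empty_iff_forall_notMem.1 h b ⟨hb, hsub hb⟩

lemma ar_R_closed (hKc : IsCompact K) (hKinv : IsInvariantSet φ K)
    (hA : IsAttractorIn φ K A) :
    IsClosed {x ∈ K | omegaLim φ x ∩ A = ∅} := by
  obtain ⟨hAK, hAc, hAinv, ⟨U, hUo, hAU, hUatt⟩, hstab⟩ := hA
  apply isClosed_of_closure_subset
  intro x hx
  have hxK : x ∈ K := closure_minimal (fun y hy => hy.1) hKc.isClosed hx
  refine ⟨hxK, ?_⟩
  by_contra h
  obtain ⟨a, haω, haA⟩ := Set.nonempty_iff_ne_empty.2 h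
  obtain ⟨s, _, hsU⟩ := frequently_pos haω hUo (hAU haA) 0
  have hO : IsOpen ((fun z => φ z s) ⁻¹' U) := hUo.preimage (cont1 hcont s)
  obtain ⟨x', hx'O, hx'R⟩ := mem_closure_iff.1 hx _ hO hsU
  obtain ⟨hne, hsub⟩ := hUatt (φ x' s) ⟨inv_mem hKinv hx'R.1 s, hx'O⟩
  rw [omegaLim_shift hadd] at hne hsub
  obtain ⟨b, hb⟩ := hne
  exact Set.eq_empty_iff_forall_notMem.1 hx'R.2 b ⟨hb, hsub hb⟩

lemma ar_R_inv (hKinv : IsInvariantSet φ K) :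
    IsInvariantSet φ {x ∈ K | omegaLim φ x ∩ A = ∅} :=
  mk_invariant h0 hadd fun x hx t =>
    ⟨inv_mem hKinv hx.1 t, by rw [omegaLim_shift hadd]; exact hx.2⟩

/-- For `x ∈ K \ A`, the alpha limit set of `x` lies in the dual repeller. -/
lemma ar_alpha (hKc : IsCompact K) (hKinv : IsInvariantSet φ K)
    (hA : IsAttractorIn φ K A) {x : M} (hxK : x ∈ K) (hxA : x ∉ A) :
    omegaLimNeg φ x ⊆ {x ∈ K | omegaLim φ x ∩ A = ∅} := by
  intro y hy
  have hyK : y ∈ K := by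
    have h1 : y ∈ closure (ntl φ x 0) := mem_omegaLimNeg.1 hy 0
    have h2 : ntl φ x 0 ⊆ K := by rintro z ⟨s, _, rfl⟩; exact inv_mem hKinv hxK s
    exact (closure_minimal h2 hKc.isClosed) h1
  refine ⟨hyK, ?_⟩
  by_contra h
  obtain ⟨a, haω, haA⟩ := Set.nonempty_iff_ne_empty.2 h
  have key : ∀ W, IsOpen W → A ⊆ W → x ∈ W := by
    intro W hWo hAW
    obtain ⟨V, hVo, hAV, hVstab⟩ := hA.2.2.2.2 W hWo hAW
    obtain ⟨s, hs0, hsV⟩ := frequently_pos haω hVo (hAV haA) 0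
    have hO : IsOpen ((fun z => φ z s) ⁻¹' V) := hVo.preimage (cont1 hcont s)
    obtain ⟨r, hr, hrV⟩ := frequently_neg hy hO (Set.mem_preimage.2 hsV) (-s)
    rw [Set.mem_preimage, hadd] at hrV
    have hrsK : φ x (r + s) ∈ K := inv_mem hKinv hxK (r + s)
    have := hVstab (φ x (r + s)) ⟨hrsK, hrV⟩ (-(r + s)) (by linarith)
    rwa [hadd, add_neg_cancel, h0] at this
  obtain ⟨W, hWo, hAW, hnc⟩ := sep_of_not_mem hA.2.1 hxA
  exact hnc (subset_closure (key W hWo hAW))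

end AR

section Robust
variable [LocallyCompactSpace M] {R A' : Set M}
variable (hcont : Continuous fun p : M × ℝ => φ p.1 p.2)
  (h0 : ∀ x, φ x 0 = x) (hadd : ∀ x s t, φ (φ x s) t = φ x (s + t))
include hcont h0 hadd

/-- Robust stability: orbit segments that start near the attractor `A'` of `R` and
remain in a sufficiently small neighborhood of `R` stay in a prescribed
neighborhood `W` of `A'`. -/
lemma robust_stability (hRc : IsCompact R) (hRinv : IsInvariantSet φ R)
    (hA' : IsAttractorIn φ R A') {W : Set M} (hWo : IsOpen W) (hAW : A' ⊆ W) :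
    ∃ V, IsOpen V ∧ A' ⊆ V ∧ ∃ δ : ℝ, 0 < δ ∧ ∀ p : M, ∀ t : ℝ, 0 ≤ t → p ∈ V →
      (∀ s, 0 ≤ s → s ≤ t → φ p s ∈ Metric.thickening δ R) → φ p t ∈ W := by
  obtain ⟨hAR, hAc, hAinv, ⟨U₀, hU₀o, hAU₀, hU₀att⟩, hstab⟩ := hA'
  -- an open set W₂ with compact closure, between A' and W ∩ U₀
  obtain ⟨L, hLc, hL1, hL2⟩ := exists_compact_between hAc (hWo.inter hU₀o)
    (Set.subset_inter hAW hAU₀)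
  set W₂ := interior L with hW₂def
  have hW₂o : IsOpen W₂ := isOpen_interior
  have hAW₂ : A' ⊆ W₂ := hL1
  have hclW₂ : closure W₂ ⊆ W ∩ U₀ := (closure_minimal interior_subset hLc.isClosed).trans hL2
  -- stability level 0
  obtain ⟨V₀', hV₀'o, hAV₀', hstab₀⟩ := hstab W₂ hW₂o hAW₂
  obtain ⟨L₀, hL₀c, hL₀1, hL₀2⟩ := exists_compact_between hAc (hV₀'o.inter hW₂o)
    (Set.subset_inter hAV₀' hAW₂)
  set V₀ := interior L₀ with hV₀def
  have hV₀o : IsOpen V₀ := isOpen_interior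
  have hAV₀ : A' ⊆ V₀ := hL₀1
  have hclV₀ : closure V₀ ⊆ V₀' ∩ W₂ := (closure_minimal interior_subset hL₀c.isClosed).trans hL₀2
  have hclV₀c : IsCompact (closure V₀) :=
    hL₀c.of_isClosed_subset isClosed_closure (closure_minimal interior_subset hL₀c.isClosed)
  -- stability level 1
  obtain ⟨V₁', hV₁'o, hAV₁', hstab₁⟩ := hstab V₀ hV₀o hAV₀
  obtain ⟨L₁, hL₁c, hL₁1, hL₁2⟩ := exists_compact_between hAc (hV₁'o.inter hV₀o)
    (Set.subset_inter hAV₁' hAV₀)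
  set V₁ := interior L₁ with hV₁def
  have hclV₁ : closure V₁ ⊆ V₁' ∩ V₀ := (closure_minimal interior_subset hL₁c.isClosed).trans hL₁2
  have hclV₁c : IsCompact (closure V₁) :=
    hL₁c.of_isClosed_subset isClosed_closure (closure_minimal interior_subset hL₁c.isClosed)
  have hV₁V₀ : V₁ ⊆ V₀ := fun y hy => (hclV₁ (subset_closure hy)).2
  have hV₀W : V₀ ⊆ W := fun y hy => (hclW₂ (subset_closure (hclV₀ (subset_closure hy)).2)).1
  refine ⟨V₁, isOpen_interior, hL₁1, ?_⟩
  by_contra hcon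
  push_neg at hcon
  have hseq : ∀ n : ℕ, ∃ p t, 0 ≤ t ∧ p ∈ V₁ ∧
      (∀ s, 0 ≤ s → s ≤ t → φ p s ∈ Metric.thickening (1 / (n + 1)) R) ∧ φ p t ∉ W := by
    intro n
    obtain ⟨p, t, h1, h2, h3⟩ := hcon (1 / (n + 1)) (by positivity)
    exact ⟨p, t, h1, h2, h3⟩
  choose p t ht hp hseg hout using hseq
  have hpath : ∀ n, Continuous fun s : ℝ => φ (p n) s := fun n => cont2 hcont (p n)
  -- first exit times from V₀
  set E : ℕ → Set ℝ := fun n => Set.Icc 0 (t n) ∩ (fun s => φ (p n) s) ⁻¹' V₀ᶜ with hEdef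
  have hEc : ∀ n, IsClosed (E n) := fun n =>
    isClosed_Icc.inter (hV₀o.isClosed_compl.preimage (hpath n))
  have hEne : ∀ n, (E n).Nonempty := fun n =>
    ⟨t n, ⟨ht n, le_refl _⟩, fun hc => hout n (hV₀W hc)⟩
  have hEbdd : ∀ n, BddBelow (E n) := fun n => ⟨0, fun y hy => hy.1.1⟩
  set s : ℕ → ℝ := fun n => sInf (E n) with hsdef
  have hsE : ∀ n, s n ∈ E n := fun n => (hEc n).csInf_mem (hEne n) (hEbdd n)
  have hs0 : ∀ n, 0 ≤ s n := fun n => (hsE n).1.1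
  have hst : ∀ n, s n ≤ t n := fun n => (hsE n).1.2
  have hsV₀ : ∀ n, φ (p n) (s n) ∉ V₀ := fun n => (hsE n).2
  have hsmin : ∀ n, ∀ u, 0 ≤ u → u < s n → φ (p n) u ∈ V₀ := by
    intro n u hu0 hus
    by_contra hc
    have : u ∈ E n := ⟨⟨hu0, hus.le.trans (hst n)⟩, hc⟩
    exact absurd (csInf_le (hEbdd n) this) (not_le.2 hus)
  have hspos : ∀ n, 0 < s n := by
    intro n
    rcases (hs0 n).lt_or_eq with h | h
    · exact h
    · exfalso
      apply hsV₀ n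
      rw [← h, h0]
      exact hV₁V₀ (hp n)
  set q : ℕ → M := fun n => φ (p n) (s n) with hqdef
  have hqcl : ∀ n, q n ∈ closure V₀ := by
    intro n
    have h1 : s n ∈ closure (Set.Ico 0 (s n)) := by
      rw [closure_Ico (hspos n).ne]
      exact ⟨hs0 n, le_refl _⟩
    have h2 := image_closure_subset_closure_image (hpath n) (Set.mem_image_of_mem _ h1)
    refine closure_mono ?_ h2
    rintro z ⟨u, ⟨hu0, hus⟩, rfl⟩
    exact hsmin n u hu0 hus
  have hqth : ∀ n : ℕ, q n ∈ Metric.thickening (1 / (n + 1)) R :=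
    fun n => hseg n (s n) (hs0 n) (hst n)
  -- limits of sequences near R are in R
  have hlimR : ∀ (x : ℕ → M) (l : M),
      (∀ n, ∃ m : ℕ, n ≤ m ∧ x n ∈ Metric.thickening (1 / (m + 1)) R) →
      Tendsto x atTop (𝓝 l) → l ∈ R := by
    intro x l hx hl
    have : ∀ n : ℕ, ∃ z ∈ R, dist (x n) z < 1 / (n + 1) := by
      intro n
      obtain ⟨m, hnm, hmem⟩ := hx n
      obtain ⟨z, hz, hdz⟩ := Metric.mem_thickening_iff.1 hmem
      refine ⟨z, hz, lt_of_lt_of_le hdz ?_⟩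
      apply one_div_le_one_div_of_le (by positivity)
      have : (n : ℝ) ≤ m := Nat.cast_le.2 hnm
      linarith
    choose z hz hdz using this
    have hzl : Tendsto z atTop (𝓝 l) := by
      rw [tendsto_iff_dist_tendsto_zero]
      apply squeeze_zero (fun n => dist_nonneg) (fun n => ?_)
        (g := fun n : ℕ => 1 / (n + 1) + dist (x n) l)
      · have h1 : Tendsto (fun n : ℕ => dist (x n) l) atTop (𝓝 0) :=
          tendsto_iff_dist_tendsto_zero.1 hl
        have := tendsto_one_div_add_atTop_nhds_zero_nat.add h1
        simpa using this
      · calc dist (z n) l ≤ dist (z n) (x n) + dist (x n) l := dist_triangle _ _ _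
          _ ≤ 1 / (n + 1) + dist (x n) l := by
              have := hdz n
              rw [dist_comm]
              linarith
    exact hRc.isClosed.mem_of_tendsto hzl (Filter.Eventually.of_forall hz)
  -- extract a convergent subsequence of exit points
  obtain ⟨qlim, hqlim_mem, ψ, hψ, hψt⟩ := hclV₀c.tendsto_subseq hqcl
  have hψle : ∀ n, n ≤ ψ n := fun n => hψ.le_apply
  have hqR : qlim ∈ R := by
    refine hlimR (q ∘ ψ) qlim (fun n => ⟨ψ n, hψle n, hqth (ψ n)⟩) hψt
  have hqnV₀ : qlim ∉ V₀ := by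
    have := (hV₀o.isClosed_compl).mem_of_tendsto hψt
      (Filter.Eventually.of_forall fun n => hsV₀ (ψ n))
    exact this
  by_cases hub : ∀ u : ℝ, ∃ᶠ n in atTop, u ≤ s (ψ n)
  · -- unbounded exit times: the whole backward orbit of qlim lies in closure V₀
    have hback : ∀ u : ℝ, 0 ≤ u → φ qlim (-u) ∈ closure V₀ := by
      intro u hu
      rcases hu.lt_or_eq with h | h
      · have hfreq : ∃ᶠ n in atTop, φ (q (ψ n)) (-u) ∈ closure V₀ := by
          refine (hub (u + 1)).mono ?_
          intro n hn
          have h1 : φ (q (ψ n)) (-u) = φ (p (ψ n)) (s (ψ n) - u) := by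
            rw [hqdef]
            show φ (φ (p (ψ n)) (s (ψ n))) (-u) = _
            rw [hadd]
            ring_nf
          rw [h1]
          exact subset_closure (hsmin (ψ n) _ (by linarith) (by linarith))
        have htd : Tendsto (fun n => φ (q (ψ n)) (-u)) atTop (𝓝 (φ qlim (-u))) :=
          ((cont1 hcont (-u)).tendsto qlim).comp hψt
        exact isClosed_closure.mem_of_frequently_of_tendsto hfreq htd
      · rw [← h, neg_zero, h0]
        exact hqlim_mem
    have hqorb : ∀ r : ℝ, φ qlim r ∈ R := fun r => inv_mem hRinv hqR r
    have hnt : ntl φ qlim (-1) ⊆ R ∩ closure V₀ := by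
      rintro z ⟨r, hr, rfl⟩
      refine ⟨hqorb r, ?_⟩
      have := hback (-r) (by linarith)
      rwa [neg_neg] at this
    have hωn_sub : omegaLimNeg φ qlim ⊆ R ∩ closure V₀ := fun z hz =>
      (closure_minimal hnt (hRc.isClosed.inter isClosed_closure)) (mem_omegaLimNeg.1 hz (-1))
    obtain ⟨y, hy⟩ := omegaLimNeg_nonempty hRc hqorb
    have hyR : y ∈ R := (hωn_sub hy).1
    have hyU₀ : y ∈ U₀ := (hclW₂ (subset_closure (hclV₀ (hωn_sub hy).2).2)).2
    obtain ⟨hωyne, hωyA⟩ := hU₀att y ⟨hyR, hyU₀⟩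
    have hωy_sub : omegaLim φ y ⊆ omegaLimNeg φ qlim :=
      omegaLim_subset_of_inv (omegaLimNeg_closed qlim)
        (fun w hw tt _ => omegaLimNeg_inv hcont hadd hw tt) hy
    obtain ⟨a₀, ha₀⟩ := hωyne
    obtain ⟨r, hr0, hrV⟩ := frequently_neg (hωy_sub ha₀) hV₁'o (hAV₁' (hωyA ha₀)) 0
    have := hstab₁ (φ qlim r) ⟨hqorb r, hrV⟩ (-r) (by linarith)
    rw [hadd, add_neg_cancel, h0] at this
    exact hqnV₀ this
  · -- bounded exit times
    push_neg at hub
    obtain ⟨u, hu⟩ := hub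
    obtain ⟨N, hN⟩ := Filter.eventually_atTop.1 hu
    have hS'mem : ∀ n : ℕ, s (ψ (n + N)) ∈ Set.Icc (0 : ℝ) u := by
      intro n
      refine ⟨hs0 _, ?_⟩
      have := hN (n + N) (Nat.le_add_left N n)
      exact this.le
    obtain ⟨sl, hsl_mem, ψ₂, hψ₂, hψ₂t⟩ :=
      (isCompact_Icc (a := (0:ℝ)) (b := u)).tendsto_subseq hS'mem
    have hP'mem : ∀ n : ℕ, p (ψ (ψ₂ n + N)) ∈ closure V₁ := fun n =>
      subset_closure (hp (ψ (ψ₂ n + N)))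
    obtain ⟨pl, hpl_mem, ψ₃, hψ₃, hψ₃t⟩ := hclV₁c.tendsto_subseq hP'mem
    set ρ : ℕ → ℕ := fun n => ψ₂ (ψ₃ n) + N with hρdef
    have hρle : ∀ n, n ≤ ρ n := fun n =>
      le_trans (le_trans hψ₃.le_apply hψ₂.le_apply) (Nat.le_add_right _ _)
    have hρtop : Tendsto ρ atTop atTop :=
      tendsto_atTop_mono hρle tendsto_id
    -- limits
    have hStend : Tendsto (fun n => s (ψ (ρ n))) atTop (𝓝 sl) := hψ₂t.comp hψ₃.tendsto_atTop
    have hPtend : Tendsto (fun n => p (ψ (ρ n))) atTop (𝓝 pl) := hψ₃t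
    have hQtend : Tendsto (fun n => q (ψ (ρ n))) atTop (𝓝 qlim) := hψt.comp hρtop
    have hplR : pl ∈ R := by
      refine hlimR (fun n => p (ψ (ρ n))) pl (fun n => ⟨ψ (ρ n), le_trans (hρle n) (hψle _), ?_⟩) hPtend
      have := hseg (ψ (ρ n)) 0 (le_refl _) (ht _)
      rwa [h0] at this
    have hplV₁' : pl ∈ V₁' := (hclV₁ hpl_mem).1
    have hkey := hstab₁ pl ⟨hplR, hplV₁'⟩ sl hsl_mem.1
    have hQtend2 : Tendsto (fun n => q (ψ (ρ n))) atTop (𝓝 (φ pl sl)) := by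
      have hpair : Tendsto (fun n => (p (ψ (ρ n)), s (ψ (ρ n)))) atTop (𝓝 (pl, sl)) :=
        hPtend.prodMk_nhds hStend
      exact (hcont.tendsto (pl, sl)).comp hpair
    have : qlim = φ pl sl := tendsto_nhds_unique hQtend hQtend2
    rw [this] at hqnV₀
    exact hqnV₀ hkey

end Robust
end MorseAux

open MorseAux in
/-- If `(A, R)` is an attractor-repeller decomposition of `K` and `(A', R')` is
an attractor-repeller decomposition of `R`, then `{A, A', R'}` is a Morse
decomposition of `K`. -/
theorem morse_from_nested_attractor_repeller
    {M : Type*} [MetricSpace M] [LocallyCompactSpace M] (φ : M → ℝ → M)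
    (hcont : Continuous fun p : M × ℝ => φ p.1 p.2)
    (h0 : ∀ x, φ x 0 = x)
    (hadd : ∀ x s t, φ (φ x s) t = φ x (s + t))
    (K : Set M) (hK : IsCompact K ∧ IsInvariantSet φ K)
    (A R A' R' : Set M)
    (h1 : IsARDecomposition φ K A R)
    (h2 : IsARDecomposition φ R A' R') :
    IsMorseDecomposition φ K ![A, A', R'] := by
  obtain ⟨hKc, hKinv⟩ := hK
  obtain ⟨hA_att, hR_def⟩ := h1
  obtain ⟨hA'_att, hR'_def⟩ := h2
  have hAK : A ⊆ K := hA_att.1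
  have hAc : IsCompact A := hA_att.2.1
  have hAinv : IsInvariantSet φ A := hA_att.2.2.1
  have hA'R : A' ⊆ R := hA'_att.1
  have hA'c : IsCompact A' := hA'_att.2.1
  have hA'inv : IsInvariantSet φ A' := hA'_att.2.2.1
  have hRsub : R ⊆ K := by rw [hR_def]; exact fun x hx => hx.1
  have hRclosed : IsClosed R := by
    rw [hR_def]; exact ar_R_closed hcont h0 hadd hKc hKinv hA_att
  have hRc : IsCompact R := hKc.of_isClosed_subset hRclosed hRsub
  have hRinv : IsInvariantSet φ R := by
    rw [hR_def]; exact ar_R_inv hcont h0 hadd hKinv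
  have hR'sub : R' ⊆ R := by rw [hR'_def]; exact fun x hx => hx.1
  have hR'closed : IsClosed R' := by
    rw [hR'_def]; exact ar_R_closed hcont h0 hadd hRc hRinv hA'_att
  have hR'c : IsCompact R' := hRc.of_isClosed_subset hR'closed hR'sub
  have hR'inv : IsInvariantSet φ R' := by
    rw [hR'_def]; exact ar_R_inv hcont h0 hadd hRinv
  have hAnotR : ∀ x ∈ A, x ∉ R := by
    intro x hx hxR
    rw [hR_def] at hxR
    exact ar_not_in_R hcont h0 hadd hA_att hx hxR.2
  have hA'notR' : ∀ x ∈ A', x ∉ R' := by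
    intro x hx hxR'
    rw [hR'_def] at hxR'
    exact ar_not_in_R hcont h0 hadd hA'_att hx hxR'.2
  have d1 : Disjoint A A' := Set.disjoint_left.2 fun x hx hx' => hAnotR x hx (hA'R hx')
  have d2 : Disjoint A R' := Set.disjoint_left.2 fun x hx hx' => hAnotR x hx (hR'sub hx')
  have d3 : Disjoint A' R' := Set.disjoint_left.2 fun x hx hx' => hA'notR' x hx hx'
  refine ⟨?_, ?_, ?_⟩
  · intro i j hij
    fin_cases i <;> fin_cases j <;>
      first
        | exact absurd rfl hij
        | exact d1 | exact d1.symm | exact d2 | exact d2.symm | exact d3 | exact d3.symm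
  · intro i
    fin_cases i
    · exact ⟨hAK, hAc, hAinv⟩
    · exact ⟨hA'R.trans hRsub, hA'c, hA'inv⟩
    · exact ⟨hR'sub.trans hRsub, hR'c, hR'inv⟩
  · intro x hx
    obtain ⟨hxK, hxU⟩ := hx
    have hxA : x ∉ A := fun h => hxU (Set.mem_iUnion.2 ⟨0, h⟩)
    have hxA' : x ∉ A' := fun h => hxU (Set.mem_iUnion.2 ⟨1, h⟩)
    have hxR' : x ∉ R' := fun h => hxU (Set.mem_iUnion.2 ⟨2, h⟩)
    have horbK : ∀ s : ℝ, φ x s ∈ K := fun s => inv_mem hKinv hxK s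
    by_cases hxR : x ∈ R
    · -- connecting orbit inside R
      have hne : (omegaLim φ x ∩ A').Nonempty := by
        rw [Set.nonempty_iff_ne_empty]
        intro h
        exact hxR' (by rw [hR'_def]; exact ⟨hxR, h⟩)
      have hω := (ar_basin hcont h0 hadd hRinv hA'_att hxR hne).2
      have hα := ar_alpha hcont h0 hadd hRc hRinv hA'_att hxR hxA'
      refine ⟨1, 2, by decide, hω, ?_⟩
      show omegaLimNeg φ x ⊆ R'
      rw [hR'_def]
      exact hα
    · -- x outside R : omega limit in A
      have hne : (omegaLim φ x ∩ A).Nonempty := by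
        rw [Set.nonempty_iff_ne_empty]
        intro h
        exact hxR (by rw [hR_def]; exact ⟨hxK, h⟩)
      have hω := (ar_basin hcont h0 hadd hKinv hA_att hxK hne).2
      have hα : omegaLimNeg φ x ⊆ R := by
        have := ar_alpha hcont h0 hadd hKc hKinv hA_att hxK hxA
        rwa [← hR_def] at this
      by_cases hSA : (omegaLimNeg φ x ∩ A').Nonempty
      · -- alpha limit set meets A' : it is contained in A'
        refine ⟨0, 1, by decide, hω, ?_⟩
        show omegaLimNeg φ x ⊆ A'
        intro z hz
        by_contra hzA'
        obtain ⟨W, hWo, hAW, hzW⟩ := sep_of_not_mem hA'c hzA'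
        apply hzW
        rw [mem_closure_iff]
        intro O hOo hzO
        obtain ⟨V, hVo, hAV, δ, hδ, hrob⟩ :=
          robust_stability hcont h0 hadd hRc hRinv hA'_att hWo hAW
        obtain ⟨a, haS, haA'⟩ := hSA
        have hN : omegaLimNeg φ x ⊆ Metric.thickening δ R :=
          hα.trans (Metric.self_subset_thickening hδ R)
        obtain ⟨T, hT⟩ := eventually_neg_tail_subset hKc horbK Metric.isOpen_thickening hN
        obtain ⟨r₁, hr₁T, hr₁O⟩ := frequently_neg hz hOo hzO T
        obtain ⟨r₀, hr₀, hr₀V⟩ := frequently_neg haS hVo (hAV haA') r₁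
        have hseg : ∀ u, 0 ≤ u → u ≤ r₁ - r₀ → φ (φ x r₀) u ∈ Metric.thickening δ R := by
          intro u hu1 hu2
          rw [hadd]
          exact hT _ (by linarith)
        have hend := hrob (φ x r₀) (r₁ - r₀) (by linarith) hr₀V hseg
        rw [hadd, show r₀ + (r₁ - r₀) = r₁ by ring] at hend
        exact ⟨φ x r₁, hr₁O, hend⟩
      · -- alpha limit set misses A' : it is contained in R'
        refine ⟨0, 2, by decide, hω, ?_⟩
        show omegaLimNeg φ x ⊆ R'
        intro z hz
        rw [hR'_def]
        refine ⟨hα hz, ?_⟩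
        rw [← Set.not_nonempty_iff_eq_empty]
        rintro ⟨w, hw, hwA'⟩
        apply hSA
        have hωz : omegaLim φ z ⊆ omegaLimNeg φ x :=
          omegaLim_subset_of_inv (omegaLimNeg_closed x)
            (fun v hv tt _ => omegaLimNeg_inv hcont hadd hv tt) hz
        exact ⟨w, hωz hw, hwA'⟩
end

section
/- Let φ be a flow on a locally compact metric space and K a compact invariant set with attractor-repeller decomposition (A, R). If K is itself an attractor for φ, then A is an attractor for φ (on the whole space, not merely for the restricted flow φ|_K). -/
open Set Topology

open Metric

section key
variable {M : Type*} [MetricSpace M] (φ : M → ℝ → M)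

theorem key_lemma
    (hcont : Continuous fun p : M × ℝ => φ p.1 p.2)
    (h0 : ∀ x, φ x 0 = x)
    (hadd : ∀ x s t, φ (φ x s) t = φ x (s + t))
    (K A : Set M) (hKinv : ∀ t : ℝ, (fun y => φ y t) '' K = K)
    (C : Set M) (hC : IsCompact C)
    (hCω : ∀ x ∈ C, (omegaLim φ x).Nonempty ∧ omegaLim φ x ⊆ A)
    (V' Ut : Set M) (hV' : IsOpen V') (hAV' : A ⊆ V')
    (hstab : ∀ x ∈ K ∩ V', ∀ t ≥ (0:ℝ), φ x t ∈ Ut)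
    (y : M) (hyK : y ∈ K) (hyC : ∀ s ≥ (0:ℝ), φ y (-s) ∈ C) : y ∈ Ut := by
  have hKmem : ∀ {z : M}, z ∈ K → ∀ t : ℝ, φ z t ∈ K := by
    intro z hz t
    have := hKinv t
    rw [← this]; exact Set.mem_image_of_mem _ hz
  -- backward sequence
  have hzC : ∀ j : ℕ, φ y (-(j:ℝ)) ∈ C := fun j => hyC j (Nat.cast_nonneg j)
  obtain ⟨w, hwC, ψ, hψ, hψtend⟩ := hC.tendsto_subseq hzC
  obtain ⟨⟨p, hp⟩, hsubA⟩ := hCω w hwC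
  -- find T ≥ 1 with φ w T ∈ V'
  have hp1 : p ∈ closure {q | ∃ s ≥ (1:ℝ), φ w s = q} := by
    have := Set.mem_iInter₂.1 hp (1:ℝ) (by norm_num : (1:ℝ) ∈ Set.Ioi (0:ℝ))
    exact this
  have hpV' : p ∈ V' := hAV' (hsubA hp)
  obtain ⟨q₀, hq₀V', T, hT1, hq₀eq⟩ : ∃ q₀ ∈ V', ∃ s ≥ (1:ℝ), φ w s = q₀ := by
    have := (_root_.mem_closure_iff.1 hp1) V' hV' hpV'
    obtain ⟨q₀, hq₀V, hq₀⟩ := this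
    exact ⟨q₀, hq₀V, hq₀⟩
  have hwT : φ w T ∈ V' := hq₀eq ▸ hq₀V'
  -- continuity: φ (φ y (-(ψ m))) T → φ w T
  have hcx : Continuous fun x => φ x T := hcont.comp (continuous_id.prodMk continuous_const)
  have htend2 : Filter.Tendsto (fun m => φ (φ y (-(ψ m : ℝ))) T) Filter.atTop (nhds (φ w T)) :=
    (hcx.continuousAt.tendsto.comp hψtend)
  have hev : ∀ᶠ m in Filter.atTop, φ (φ y (-(ψ m : ℝ))) T ∈ V' :=
    htend2.eventually (hV'.mem_nhds hwT)
  obtain ⟨m₀, hm₀⟩ := Filter.eventually_atTop.1 hev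
  set m := max m₀ (Nat.ceil T) with hm
  have hmV : φ (φ y (-(ψ m : ℝ))) T ∈ V' := hm₀ m (le_max_left _ _)
  have hψm : (T:ℝ) ≤ (ψ m : ℝ) := by
    calc (T:ℝ) ≤ (Nat.ceil T : ℝ) := Nat.le_ceil T
    _ ≤ (m : ℝ) := by exact_mod_cast Nat.cast_le.2 (le_max_right m₀ _)
    _ ≤ (ψ m : ℝ) := by exact_mod_cast Nat.cast_le.2 (hψ.le_apply)
  have heq1 : φ (φ y (-(ψ m : ℝ))) T = φ y (-(ψ m : ℝ) + T) := hadd _ _ _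
  set q := φ y (-(ψ m : ℝ) + T) with hq
  have hqV' : q ∈ V' := heq1 ▸ hmV
  have hqK : q ∈ K := hKmem hyK _
  have := hstab q ⟨hqK, hqV'⟩ ((ψ m : ℝ) - T) (by linarith)
  have heq2 : φ q ((ψ m : ℝ) - T) = y := by
    rw [hq, hadd]
    have : (-(ψ m : ℝ) + T + ((ψ m : ℝ) - T)) = 0 := by ring
    rw [this, h0]
  rwa [heq2] at this

end key

theorem stab_lemma {M : Type*} [MetricSpace M] [LocallyCompactSpace M] (φ : M → ℝ → M)
    (hcont : Continuous fun p : M × ℝ => φ p.1 p.2)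
    (h0 : ∀ x, φ x 0 = x)
    (hadd : ∀ x s t, φ (φ x s) t = φ x (s + t))
    (K A : Set M) (hKcomp : IsCompact K)
    (hKinv : ∀ t : ℝ, (fun y => φ y t) '' K = K)
    (hKstab : ∀ U : Set M, IsOpen U → K ⊆ U →
      ∃ V : Set M, IsOpen V ∧ K ⊆ V ∧ ∀ x ∈ V, ∀ t ≥ (0:ℝ), φ x t ∈ U)
    (hAK : A ⊆ K) (hAcomp : IsCompact A)
    (hAinv : ∀ t : ℝ, (fun y => φ y t) '' A = A)
    (U₀ : Set M) (hU₀op : IsOpen U₀) (hAU₀ : A ⊆ U₀)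
    (hω : ∀ x ∈ K ∩ U₀, (omegaLim φ x).Nonempty ∧ omegaLim φ x ⊆ A)
    (hrel : ∀ U : Set M, IsOpen U → A ⊆ U →
      ∃ V : Set M, IsOpen V ∧ A ⊆ V ∧ ∀ x ∈ K ∩ V, ∀ t ≥ (0:ℝ), φ x t ∈ U)
    (U : Set M) (hU : IsOpen U) (hAU : A ⊆ U) :
    ∃ V : Set M, IsOpen V ∧ A ⊆ V ∧ ∀ x ∈ V, ∀ t ≥ (0:ℝ), φ x t ∈ U := by
  have hAmem : ∀ {z : M}, z ∈ A → ∀ t : ℝ, φ z t ∈ A := by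
    intro z hz t; have := hAinv t; rw [← this]; exact Set.mem_image_of_mem _ hz
  obtain ⟨L, hLcomp, hAL, hLsub⟩ :=
    exists_compact_between hAcomp (hU.inter hU₀op) (Set.subset_inter hAU hAU₀)
  set U₂ := interior L with hU₂def
  have hU₂open : IsOpen U₂ := isOpen_interior
  have hAU₂ : A ⊆ U₂ := hAL
  have hclU₂L : closure U₂ ⊆ L := closure_minimal interior_subset hLcomp.isClosed
  have hclcomp : IsCompact (closure U₂) := hLcomp.of_isClosed_subset isClosed_closure hclU₂L
  have hU₂U : U₂ ⊆ U := fun z hz => (hLsub (interior_subset hz)).1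
  have hU₂U₀ : closure U₂ ⊆ U₀ := fun z hz => (hLsub (hclU₂L hz)).2
  by_contra hcon
  push_neg at hcon
  obtain ⟨ε₂, hε₂pos, hε₂⟩ := hAcomp.exists_thickening_subset_open hU₂open hAU₂
  have hch : ∀ n : ℕ, ∃ x, x ∈ thickening (ε₂/(n+1)) A ∧ ∃ t, 0 ≤ t ∧ φ x t ∉ U := by
    intro n
    obtain ⟨x, hx1, t, ht, htn⟩ := hcon (thickening (ε₂/(n+1)) A) isOpen_thickening
      (self_subset_thickening (by positivity) A)
    exact ⟨x, hx1, t, ht, htn⟩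
  choose x hxA t₀ ht₀0 ht₀U using hch
  have hO : ∀ O : Set M, IsOpen O → A ⊆ O → ∃ N : ℕ, ∀ n ≥ N, x n ∈ O := by
    intro O hOop hAO
    obtain ⟨ε, hεpos, hεsub⟩ := hAcomp.exists_thickening_subset_open hOop hAO
    obtain ⟨N, hN⟩ := exists_nat_gt (ε₂/ε)
    refine ⟨N, fun n hn => hεsub (thickening_mono ?_ A (hxA n))⟩
    have h1 : (N:ℝ) ≤ n := Nat.cast_le.2 hn
    rw [div_le_iff₀ (by positivity)]
    rw [div_lt_iff₀ hεpos] at hN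
    nlinarith
  have hxU₂ : ∀ n, x n ∈ U₂ := by
    intro n
    refine hε₂ (thickening_mono ?_ A (hxA n))
    have hn0 : (0:ℝ) ≤ (n:ℝ) := Nat.cast_nonneg n
    have : (1:ℝ) ≤ (n:ℝ) + 1 := by linarith
    calc ε₂/((n:ℝ)+1) ≤ ε₂/1 := by apply div_le_div_of_nonneg_left hε₂pos.le one_pos this
    _ = ε₂ := div_one _
  have hcurve : ∀ n, Continuous fun s : ℝ => φ (x n) s :=
    fun n => hcont.comp (continuous_const.prodMk continuous_id)
  set S : ℕ → Set ℝ := fun n => {s | 0 ≤ s ∧ φ (x n) s ∉ U₂} with hSdef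
  have hSne : ∀ n, (S n).Nonempty := fun n => ⟨t₀ n, ht₀0 n, fun hm => ht₀U n (hU₂U hm)⟩
  have hSbdd : ∀ n, BddBelow (S n) := fun n => ⟨0, fun s hs => hs.1⟩
  set τ : ℕ → ℝ := fun n => sInf (S n) with hτdef
  have hτ0 : ∀ n, 0 ≤ τ n := fun n => le_csInf (hSne n) fun s hs => hs.1
  have hbefore : ∀ n, ∀ s, 0 ≤ s → s < τ n → φ (x n) s ∈ U₂ := by
    intro n s hs0 hsτ
    by_contra hmem
    exact absurd (csInf_le (hSbdd n) ⟨hs0, hmem⟩) (not_le.2 hsτ)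
  have hexit : ∀ n, φ (x n) (τ n) ∉ U₂ := by
    intro n hmem
    have hnh : (fun s => φ (x n) s) ⁻¹' U₂ ∈ nhds (τ n) :=
      (hcurve n).continuousAt.preimage_mem_nhds (hU₂open.mem_nhds hmem)
    obtain ⟨δ, hδpos, hball⟩ := Metric.mem_nhds_iff.1 hnh
    obtain ⟨s, hsS, hslt⟩ := exists_lt_of_csInf_lt (hSne n) (lt_add_of_pos_right (τ n) hδpos)
    have hsge : τ n ≤ s := csInf_le (hSbdd n) hsS
    have hmemball : s ∈ Metric.ball (τ n) δ := by
      rw [Metric.mem_ball, Real.dist_eq, abs_lt]; constructor <;> linarith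
    exact hsS.2 (hball hmemball)
  have hτpos : ∀ n, 0 < τ n := by
    intro n
    rcases (hτ0 n).lt_or_eq with h | h
    · exact h
    · exfalso
      have := hexit n
      rw [← h, h0] at this
      exact this (hxU₂ n)
  set y : ℕ → M := fun n => φ (x n) (τ n) with hydef
  have hycl : ∀ n, y n ∈ closure U₂ := by
    intro n
    rw [_root_.mem_closure_iff]
    intro O hOop hyO
    have hnh : (fun s => φ (x n) s) ⁻¹' O ∈ nhds (τ n) :=
      (hcurve n).continuousAt.preimage_mem_nhds (hOop.mem_nhds hyO)
    obtain ⟨δ, hδ, hball⟩ := Metric.mem_nhds_iff.1 hnh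
    refine ⟨φ (x n) (max 0 (τ n - δ/2)), hball ?_, hbefore n _ (le_max_left _ _) ?_⟩
    · rw [Metric.mem_ball, Real.dist_eq, abs_lt]
      have hle : max 0 (τ n - δ/2) ≤ τ n := max_le (hτ0 n) (by linarith)
      constructor
      · rcases le_or_gt (τ n - δ/2) 0 with h|h
        · rw [max_eq_left h]; linarith
        · rw [max_eq_right h.le]; linarith
      · linarith
    · exact max_lt (hτpos n) (by linarith)
  have hτlarge : ∀ T : ℝ, ∃ N, ∀ n ≥ N, T ≤ τ n := by
    intro T
    rcases le_or_gt T 0 with hT | hT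
    · exact ⟨0, fun n _ => hT.trans (hτ0 n)⟩
    have hsub : A ×ˢ Set.Icc (0:ℝ) T ⊆ (fun p : M × ℝ => φ p.1 p.2) ⁻¹' U₂ := by
      rintro ⟨a, s⟩ ⟨ha, _⟩
      exact hAU₂ (hAmem ha s)
    obtain ⟨N₁, V_T, hN₁op, hVTop, hAN₁, hIccVT, hprod⟩ :=
      generalized_tube_lemma hAcomp isCompact_Icc (hU₂open.preimage hcont) hsub
    obtain ⟨N, hN⟩ := hO N₁ hN₁op hAN₁
    refine ⟨N, fun n hn => le_csInf (hSne n) fun s hs => ?_⟩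
    by_contra hlt
    push_neg at hlt
    exact hs.2 (hprod (Set.mk_mem_prod (hN n hn) (hIccVT ⟨hs.1, hlt.le⟩)))
  have hyKdist : ∀ ε > (0:ℝ), ∃ N, ∀ n ≥ N, y n ∈ thickening ε K := by
    intro ε hε
    obtain ⟨V_K, hVKop, hKVK, hVKstab⟩ := hKstab (thickening ε K) isOpen_thickening
      (self_subset_thickening hε K)
    obtain ⟨N, hN⟩ := hO V_K hVKop (hAK.trans hKVK)
    exact ⟨N, fun n hn => hVKstab (x n) (hN n hn) (τ n) (hτ0 n)⟩
  obtain ⟨yl, hylcl, ψ, hψmono, hψtend⟩ := hclcomp.tendsto_subseq hycl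
  have hylnot : yl ∉ U₂ :=
    hU₂open.isClosed_compl.mem_of_tendsto hψtend
      (Filter.Eventually.of_forall fun k => hexit (ψ k))
  have hylK : yl ∈ K := by
    rw [← hKcomp.isClosed.closure_eq, Metric.mem_closure_iff]
    intro ε hε
    obtain ⟨N, hN⟩ := hyKdist (ε/2) (by linarith)
    obtain ⟨k₀, hk₀⟩ := Metric.tendsto_atTop.1 hψtend (ε/2) (by linarith)
    have h1 : dist (y (ψ (max k₀ N))) yl < ε/2 := hk₀ _ (le_max_left _ _)
    have h2 : y (ψ (max k₀ N)) ∈ thickening (ε/2) K :=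
      hN _ ((le_max_right k₀ N).trans hψmono.le_apply)
    obtain ⟨z, hzK, hdz⟩ := Metric.mem_thickening_iff.1 h2
    refine ⟨z, hzK, ?_⟩
    calc dist yl z ≤ dist yl (y (ψ (max k₀ N))) + dist (y (ψ (max k₀ N))) z := dist_triangle _ _ _
    _ < ε := by rw [dist_comm] at h1; linarith
  have hylback : ∀ s, 0 ≤ s → φ yl (-s) ∈ K ∩ closure U₂ := by
    intro s hs
    constructor
    · have := hKinv (-s); rw [← this]; exact Set.mem_image_of_mem _ hylK
    rcases hs.lt_or_eq with hspos | hs0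
    · obtain ⟨N, hN⟩ := hτlarge s
      have htendc : Filter.Tendsto (fun k => φ (y (ψ k)) (-s)) Filter.atTop (nhds (φ yl (-s))) :=
        ((hcont.comp (continuous_id.prodMk continuous_const)).continuousAt.tendsto.comp hψtend)
      apply mem_closure_of_tendsto htendc
      rw [Filter.eventually_atTop]
      refine ⟨N, fun k hk => ?_⟩
      have hτk : s ≤ τ (ψ k) := hN (ψ k) (hk.trans hψmono.le_apply)
      have heq : φ (y (ψ k)) (-s) = φ (x (ψ k)) (τ (ψ k) + -s) := hadd _ _ _
      rw [heq]
      exact hbefore _ _ (by linarith) (by linarith)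
    · rw [← hs0, neg_zero, h0]; exact hylcl
  obtain ⟨V', hV'op, hAV', hV'stab⟩ := hrel U₂ hU₂open hAU₂
  exact hylnot (key_lemma φ hcont h0 hadd K A hKinv (K ∩ closure U₂)
    (hKcomp.inter_right isClosed_closure)
    (fun z hz => hω z ⟨hz.1, hU₂U₀ hz.2⟩) V' U₂ hV'op hAV' hV'stab yl hylK
    (fun s hs => hylback s hs))


/-- An attractor within an attractor is an attractor: if `K` is an attractor of
the flow and `(A, R)` is an attractor-repeller decomposition of `K`, then `A`
is an attractor for the flow on the whole space. -/
theorem attractor_in_attractor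
    {M : Type*} [MetricSpace M] [LocallyCompactSpace M] (φ : M → ℝ → M)
    (hcont : Continuous fun p : M × ℝ => φ p.1 p.2)
    (h0 : ∀ x, φ x 0 = x)
    (hadd : ∀ x s t, φ (φ x s) t = φ x (s + t))
    (K A R : Set M)
    (hK : IsAttractor φ K)
    (hAR : IsARDecomposition φ K A R) :
    IsAttractor φ A := by
  obtain ⟨hAttrIn, -⟩ := hAR
  obtain ⟨hAK, hAcomp, hAinv, ⟨U₀, hU₀op, hAU₀, hω⟩, hrel⟩ := hAttrIn
  obtain ⟨hKcomp, hKinv, hKstab, U_K, hUKop, hKUK, hUKattr⟩ := hK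
  have hstabA : ∀ U : Set M, IsOpen U → A ⊆ U →
      ∃ V : Set M, IsOpen V ∧ A ⊆ V ∧ ∀ x ∈ V, ∀ t ≥ (0:ℝ), φ x t ∈ U :=
    fun U hU hAU => stab_lemma φ hcont h0 hadd K A hKcomp hKinv hKstab hAK hAcomp hAinv
      U₀ hU₀op hAU₀ hω hrel U hU hAU
  refine ⟨hAcomp, hAinv, hstabA, ?_⟩
  -- attraction on the whole space
  obtain ⟨L', hL'comp, hAL', hL'sub⟩ := exists_compact_between hAcomp hU₀op hAU₀
  set W := interior L' with hWdef
  have hclWU₀ : closure W ⊆ U₀ :=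
    fun z hz => hL'sub (closure_minimal interior_subset hL'comp.isClosed hz)
  obtain ⟨V, hVop, hAV, hVstab⟩ := hstabA W isOpen_interior hAL'
  refine ⟨V ∩ U_K, hVop.inter hUKop, Set.subset_inter hAV (hAK.trans hKUK), ?_⟩
  rintro x ⟨hxV, hxUK⟩
  obtain ⟨hne, hsubK⟩ := hUKattr x hxUK
  refine ⟨hne, fun z hz => ?_⟩
  by_contra hzA
  have hzK : z ∈ K := hsubK hz
  have hseq : ∀ n : ℕ, ∃ s : ℝ, s ≥ (n:ℝ)+1 ∧ dist (φ x s) z < 1/((n:ℝ)+1) := by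
    intro n
    have hzin : z ∈ closure {q | ∃ s ≥ ((n:ℝ)+1), φ x s = q} :=
      Set.mem_iInter₂.1 hz ((n:ℝ)+1) (Set.mem_Ioi.2 (by positivity))
    obtain ⟨q, ⟨s, hs1, hs2⟩, hdq⟩ := Metric.mem_closure_iff.1 hzin (1/((n:ℝ)+1)) (by positivity)
    exact ⟨s, hs1, by rw [hs2, dist_comm]; exact hdq⟩
  choose sq hsq1 hsq2 using hseq
  have htendz : Filter.Tendsto (fun n => φ x (sq n)) Filter.atTop (nhds z) := by
    rw [Metric.tendsto_atTop]
    intro ε hε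
    obtain ⟨N, hN⟩ := exists_nat_gt (1/ε)
    refine ⟨N, fun n hn => lt_of_lt_of_le (hsq2 n) ?_⟩
    rw [div_le_iff₀ (by positivity)]
    rw [div_lt_iff₀ hε] at hN
    have hcast : (N:ℝ) ≤ n := Nat.cast_le.2 hn
    nlinarith
  have hzback : ∀ s, 0 ≤ s → φ z (-s) ∈ K ∩ closure W := by
    intro r hr
    constructor
    · have := hKinv (-r); rw [← this]; exact Set.mem_image_of_mem _ hzK
    · have htendc : Filter.Tendsto (fun n => φ (φ x (sq n)) (-r)) Filter.atTop
          (nhds (φ z (-r))) :=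
        ((hcont.comp (continuous_id.prodMk continuous_const)).continuousAt.tendsto.comp htendz)
      apply mem_closure_of_tendsto htendc
      rw [Filter.eventually_atTop]
      obtain ⟨N, hN⟩ := exists_nat_gt r
      refine ⟨N, fun n hn => ?_⟩
      have heq : φ (φ x (sq n)) (-r) = φ x (sq n + -r) := hadd _ _ _
      rw [heq]
      have hcast : (N:ℝ) ≤ n := Nat.cast_le.2 hn
      have := hsq1 n
      exact hVstab x hxV (sq n + -r) (by linarith)
  obtain ⟨V_N, hVNop, hAVN, hVNstab⟩ := hrel {z}ᶜ isClosed_singleton.isOpen_compl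
    (fun a ha => by
      simp only [Set.mem_compl_iff, Set.mem_singleton_iff]
      rintro rfl; exact hzA ha)
  exact key_lemma φ hcont h0 hadd K A hKinv (K ∩ closure W)
    (hKcomp.inter_right isClosed_closure)
    (fun q hq => hω q ⟨hq.1, hclWU₀ hq.2⟩) V_N {z}ᶜ hVNop hAVN hVNstab z hzK hzback rfl
end
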